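/- arXiv:1806.09922 — 7 statements merged into one kernel-verified Lean document; each statement's English description precedes it below -/
import Mathlib

section
/- The Itoh–Abe discrete gradient is consistent: if f: ℝⁿ → ℝ is continuously differentiable, then ∇_d f(x,y) → ∇f(x) as y → x (along points y with yᵢ ≠ xᵢ for all i). -/
/-- Consistency of the Itoh–Abe discrete gradient: as `y → x` (along points with
`y i ≠ x i` for all `i`), the discrete gradient tends to the gradient of `f` at `x`. -/
theorem itoh_abe_consistency {n : ℕ} (f : (Fin n → ℝ) → ℝ) (hf : ContDiff ℝ 1 f)
    (x : Fin n → ℝ) :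
    Filter.Tendsto
      (fun y : Fin n → ℝ => fun i : Fin n =>
        (f (fun j => if j ≤ i then x j else y j) -
          f (fun j => if j < i then x j else y j)) / (x i - y i))
      (nhdsWithin x {y : Fin n → ℝ | ∀ i, y i ≠ x i})
      (nhds (fun i : Fin n => fderiv ℝ f x (Pi.single i 1))) := by
  rw [tendsto_pi_nhds]
  intro i
  set L := fderiv ℝ f x with hL
  have hs : HasStrictFDerivAt f L x := hf.contDiffAt.hasStrictFDerivAt one_ne_zero
  set a : (Fin n → ℝ) → (Fin n → ℝ) := fun y j => if j ≤ i then x j else y j with ha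
  set b : (Fin n → ℝ) → (Fin n → ℝ) := fun y j => if j < i then x j else y j with hb
  have hab : ∀ y, a y - b y = (x i - y i) • (Pi.single i 1 : Fin n → ℝ) := by
    intro y; funext j
    by_cases hj : j = i
    · subst hj
      simp [ha, hb, Pi.single_apply]
    · have h1 : (j ≤ i) ↔ (j < i) := by
        constructor
        · intro h; exact lt_of_le_of_ne h hj
        · exact le_of_lt
      simp [ha, hb, Pi.single_apply, hj, h1]
  have hta : Filter.Tendsto a (nhds x) (nhds x) := by
    have hcont : Continuous a := by
      apply continuous_pi
      intro j
      by_cases hj : j ≤ i <;> simp only [ha, hj, if_true, if_false]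
      · exact continuous_const
      · exact continuous_apply j
    have hax : a x = x := by funext j; simp [ha]
    simpa [hax] using hcont.tendsto x
  have htb : Filter.Tendsto b (nhds x) (nhds x) := by
    have hcont : Continuous b := by
      apply continuous_pi
      intro j
      by_cases hj : j < i <;> simp only [hb, hj, if_true, if_false]
      · exact continuous_const
      · exact continuous_apply j
    have hbx : b x = x := by funext j; simp [hb]
    simpa [hbx] using hcont.tendsto x
  have hpair : Filter.Tendsto (fun y => (a y, b y))
      (nhdsWithin x {y : Fin n → ℝ | ∀ i, y i ≠ x i}) (nhds (x, x)) :=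
    by
    rw [nhds_prod_eq]
    exact ((hta.prodMk htb).mono_left nhdsWithin_le_nhds)
  have hO : (fun y => f (a y) - f (b y) - L (a y - b y))
      =o[nhdsWithin x {y : Fin n → ℝ | ∀ i, y i ≠ x i}] fun y => a y - b y :=
    hs.isLittleO.comp_tendsto hpair
  rw [Metric.tendsto_nhds]
  intro ε hε
  filter_upwards [hO.def (half_pos hε), self_mem_nhdsWithin] with y hy hys
  have hxy : x i - y i ≠ 0 := sub_ne_zero.mpr (Ne.symm (hys i))
  have hnorm : ‖a y - b y‖ = |x i - y i| := by
    rw [hab, norm_smul, Pi.norm_single, Real.norm_eq_abs, norm_one, mul_one]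
  have hLv : L (a y - b y) = (x i - y i) * L (Pi.single i 1) := by
    rw [hab, map_smul, smul_eq_mul]
  have key : (f (a y) - f (b y)) / (x i - y i) - L (Pi.single i 1)
      = (f (a y) - f (b y) - L (a y - b y)) / (x i - y i) := by
    rw [hLv]; field_simp
  rw [Real.dist_eq, key, abs_div]
  rw [hnorm] at hy
  calc |f (a y) - f (b y) - L (a y - b y)| / |x i - y i|
      ≤ (ε / 2 * |x i - y i|) / |x i - y i| := by
        rw [Real.norm_eq_abs] at hy
        gcongr
    _ = ε / 2 := by field_simp
    _ < ε := half_lt_self hε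
end

section
/- If f: ℝⁿ → ℝ is differentiable and the discrete gradient ∇_d f satisfies the discrete chain rule f(x) - f(y) = ⟪∇_d f(x,y), x - y⟫, then any sequence generated by x^{(k+1)} = x^{(k)} - h P ∇_d f(x^{(k+1)}, x^{(k)}) with h > 0 and P symmetric positive definite satisfies the discrete dissipation property f(x^{(k+1)}) ≤ f(x^{(k)}) for all k; more precisely, f(x^{(k+1)}) - f(x^{(k)}) = -h ⟪∇_d f(x^{(k+1)}, x^{(k)}), P ∇_d f(x^{(k+1)}, x^{(k)})⟫ ≤ 0. -/
open Matrix

/-- Discrete dissipation property of the discrete gradient scheme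
`x^{(k+1)} = x^{(k)} - h P ∇_d f(x^{(k+1)}, x^{(k)})`. -/
theorem discrete_dissipation {n : ℕ} (f : (Fin n → ℝ) → ℝ) (hf : Differentiable ℝ f)
    (dg : (Fin n → ℝ) → (Fin n → ℝ) → (Fin n → ℝ))
    (hdg : ∀ x y : Fin n → ℝ, f x - f y = dg x y ⬝ᵥ (x - y))
    (P : Matrix (Fin n) (Fin n) ℝ) (hP : P.IsSymm) (hPpd : P.PosDef)
    (h : ℝ) (hh : 0 < h) (x : ℕ → Fin n → ℝ)
    (hx : ∀ k : ℕ, x (k + 1) = x k - h • P.mulVec (dg (x (k + 1)) (x k))) :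
    ∀ k : ℕ,
      f (x (k + 1)) - f (x k) =
          -h * (dg (x (k + 1)) (x k) ⬝ᵥ P.mulVec (dg (x (k + 1)) (x k))) ∧
      f (x (k + 1)) ≤ f (x k) := by
  intro k
  set g := dg (x (k + 1)) (x k) with hg
  have key : f (x (k + 1)) - f (x k) = -h * (g ⬝ᵥ P.mulVec g) := by
    have hd : x (k + 1) - x k = -(h • P.mulVec g) := by
      rw [hx k]; abel
    rw [hdg, hd, dotProduct_neg, dotProduct_smul]
    simp [smul_eq_mul, hg]
  refine ⟨key, ?_⟩
  have hnn : 0 ≤ g ⬝ᵥ P.mulVec g := by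
    simpa using hPpd.posSemidef.dotProduct_mulVec_nonneg g
  nlinarith
end

section
/- Let A = D + L + U be symmetric with D = diag(A) invertible, L strictly lower triangular, U = Lᵀ strictly upper triangular, b ∈ ℝⁿ, and f(x) = ½ xᵀAx - xᵀb. For ω ∈ (0,2) and h = 2ω/(2-ω), the SOR iterate x' = (D + ωL)⁻¹[((1-ω)D - ωU)x + ωb] satisfies the implicit discrete gradient equation x' = x - h D⁻¹ ∇_d f(x', x), where (∇_d f(x',x))ᵢ = Σ_{j<i} a_{ij} x'_j + a_{ii}(x'ᵢ + xᵢ)/2 + Σ_{j>i} a_{ij} x_j - bᵢ. -/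
open Matrix Finset

/-- One SOR step coincides with the implicit Itoh–Abe discrete gradient step for the
quadratic `f x = ½ xᵀAx - xᵀb` with `P = D⁻¹` and `h = 2ω/(2-ω)`. -/
theorem sor_eq_discrete_gradient_step {n : ℕ}
    (A D L : Matrix (Fin n) (Fin n) ℝ)
    (hD : D = Matrix.diagonal (fun i => A i i))
    (hdiag : ∀ i, 0 < A i i)
    (hL : ∀ i j : Fin n, i ≤ j → L i j = 0)
    (hA : A = D + L + Lᵀ)
    (b : Fin n → ℝ) (ω : ℝ) (hω : ω ∈ Set.Ioo (0 : ℝ) 2)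
    (x x' : Fin n → ℝ)
    (hx' : x' = (D + ω • L)⁻¹.mulVec ((((1 - ω) • D - ω • Lᵀ).mulVec x) + ω • b)) :
    ∀ i : Fin n,
      x' i = x i - (2 * ω / (2 - ω)) * (A i i)⁻¹ *
        ((∑ j ∈ Finset.univ.filter (fun j => j < i), A i j * x' j) +
          A i i * (x' i + x i) / 2 +
          (∑ j ∈ Finset.univ.filter (fun j => i < j), A i j * x j) - b i) := by
  have hAlt : ∀ p q : Fin n, q < p → A p q = L p q := by
    intro p q hpq
    have := congrFun (congrFun hA p) q
    simpa [Matrix.diagonal_apply_ne _ (ne_of_gt hpq), hD, hL q p hpq.le,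
      Matrix.transpose_apply] using this
  have hAgt : ∀ p q : Fin n, p < q → A p q = L q p := by
    intro p q hpq
    have := congrFun (congrFun hA p) q
    simpa [Matrix.diagonal_apply_ne _ (ne_of_lt hpq), hD, hL p q hpq.le,
      Matrix.transpose_apply] using this
  set M := D + ω • L with hM
  have hMlt : ∀ p q : Fin n, p < q → M p q = 0 := by
    intro p q hpq
    simp [hM, hD, Matrix.diagonal_apply_ne _ (ne_of_lt hpq), hL p q hpq.le]
  have hMdiag : ∀ p, M p p = A p p := by
    intro p; simp [hM, hD, hL p p le_rfl]
  have hdet : M.det = ∏ p, A p p := by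
    rw [Matrix.det_of_lowerTriangular M (fun p q h => hMlt p q (OrderDual.toDual_lt_toDual.mp h))]
    exact Finset.prod_congr rfl fun p _ => hMdiag p
  have hunit : IsUnit M.det := by
    rw [hdet]
    exact (isUnit_iff_ne_zero).mpr (Finset.prod_pos (fun p _ => hdiag p)).ne'
  have key : M.mulVec x' = (((1 - ω) • D - ω • Lᵀ).mulVec x) + ω • b := by
    rw [hx', Matrix.mulVec_mulVec, Matrix.mul_nonsing_inv M hunit, Matrix.one_mulVec]
  intro i
  have hi := congrFun key i
  set Slt := ∑ j ∈ Finset.univ.filter (fun j => j < i), A i j * x' j with hSlt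
  set Sgt := ∑ j ∈ Finset.univ.filter (fun j => i < j), A i j * x j with hSgt
  have hDsum : ∀ v : Fin n → ℝ, ∑ j, D i j * v j = A i i * v i := by
    intro v
    rw [hD]
    simp [Matrix.diagonal_apply, ite_mul]
  have hLsum : ∑ j, L i j * x' j = Slt := by
    rw [hSlt, ← Finset.sum_filter_of_ne (p := fun j => j < i)
      (f := fun j => L i j * x' j) (s := Finset.univ)
      (by intro j _ hne; by_contra hc; exact hne (by simp [hL i j (not_lt.mp hc)]))]
    exact Finset.sum_congr rfl fun j hj => by
      rw [hAlt i j (Finset.mem_filter.mp hj).2]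
  have hUsum : ∑ j, Lᵀ i j * x j = Sgt := by
    rw [hSgt, ← Finset.sum_filter_of_ne (p := fun j => i < j)
      (f := fun j => Lᵀ i j * x j) (s := Finset.univ)
      (by intro j _ hne; by_contra hc
          exact hne (by simp [Matrix.transpose_apply, hL j i (not_lt.mp hc)]))]
    exact Finset.sum_congr rfl fun j hj => by
      rw [hAgt i j (Finset.mem_filter.mp hj).2, Matrix.transpose_apply]
  have E : A i i * x' i + ω * Slt = (1 - ω) * (A i i * x i) - ω * Sgt + ω * b i := by
    have hLHS : (M.mulVec x') i = A i i * x' i + ω * Slt := by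
      simp only [hM, Matrix.mulVec, dotProduct, Matrix.add_apply,
        Matrix.smul_apply, smul_eq_mul, add_mul, Finset.sum_add_distrib]
      rw [hDsum, ← hLsum, Finset.mul_sum]
      ring_nf
    have hRHS : ((((1 - ω) • D - ω • Lᵀ).mulVec x) + ω • b) i
        = (1 - ω) * (A i i * x i) - ω * Sgt + ω * b i := by
      simp only [Pi.add_apply, Pi.smul_apply, smul_eq_mul, Matrix.mulVec,
        dotProduct, Matrix.sub_apply, Matrix.smul_apply]
      have hptw : ∀ j, ((1 - ω) * D i j - ω * Lᵀ i j) * x j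
          = (1 - ω) * (D i j * x j) - ω * (Lᵀ i j * x j) := fun j => by ring
      rw [Finset.sum_congr rfl (fun j _ => hptw j), Finset.sum_sub_distrib,
        ← Finset.mul_sum, ← Finset.mul_sum, hDsum, hUsum]
    rw [hLHS, hRHS] at hi
    exact hi
  have ha : A i i ≠ 0 := (hdiag i).ne'
  have h2 : (2 : ℝ) - ω ≠ 0 := by have := hω.2; intro h; linarith
  have key2 : (2 - ω) * (A i i) * (x' i) =
      (2 - ω) * (A i i) * (x i) - 2 * ω * (Slt + A i i * (x' i + x i) / 2 + Sgt - b i) := by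
    linear_combination 2 * E
  clear_value Slt Sgt
  field_simp
  linear_combination 2 * key2 - 2 * E
end

section
/- For A symmetric positive definite with A = D + L + Lᵀ (D diagonal), ω ∈ (0,2), and h = 2ω/(2-ω), one SOR step starting at x strictly decreases f(x) = ½ xᵀAx - xᵀb unless x = A⁻¹b; i.e., f(G_ω x + c_ω) ≤ f(x), with equality iff Ax = b. -/
open Matrix

/-- One SOR step does not increase `f x = ½ xᵀAx - xᵀb`, with equality iff `Ax = b`. -/
theorem sor_step_decreases {n : ℕ}
    (A D L : Matrix (Fin n) (Fin n) ℝ)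
    (hApd : A.PosDef)
    (hD : D = Matrix.diagonal (fun i => A i i))
    (hL : ∀ i j : Fin n, i ≤ j → L i j = 0)
    (hA : A = D + L + Lᵀ)
    (b : Fin n → ℝ) (ω : ℝ) (hω : ω ∈ Set.Ioo (0 : ℝ) 2)
    (f : (Fin n → ℝ) → ℝ)
    (hfdef : f = fun x => (1 / 2) * (x ⬝ᵥ A.mulVec x) - x ⬝ᵥ b)
    (x x' : Fin n → ℝ)
    (hx' : x' = (D + ω • L)⁻¹.mulVec ((((1 - ω) • D - ω • Lᵀ).mulVec x) + ω • b)) :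
    f x' ≤ f x ∧ (f x' = f x ↔ A.mulVec x = b) := by
  obtain ⟨hω0, hω2⟩ := hω
  -- diagonal entries of A are positive
  have hdiag : ∀ i, 0 < A i i := by
    intro i
    have h1 : (Pi.single i (1:ℝ)) ≠ (0 : Fin n → ℝ) := by
      intro h
      have := congrFun h i
      simp at this
    have := hApd.dotProduct_mulVec_pos h1
    simpa [mulVec_single, dotProduct, Pi.single_apply, Finset.sum_ite_eq'] using this
  set M := D + ω • L with hMdef
  -- M is lower triangular
  have hMt : M.BlockTriangular ⇑OrderDual.toDual := by
    intro i j hij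
    have hij' : i < j := hij
    simp [hMdef, hD, Matrix.diagonal_apply_ne _ (ne_of_lt hij'),
      hL i j hij'.le]
  have hMdiag : ∀ i, M i i = A i i := by
    intro i
    simp [hMdef, hD, hL i i le_rfl]
  have hdet : IsUnit M.det := by
    rw [Matrix.det_of_lowerTriangular M hMt]
    refine (Finset.prod_pos fun i _ => ?_).ne'.isUnit
    rw [hMdiag]; exact hdiag i
  -- A is symmetric
  have hAsymm : Aᵀ = A := by
    rw [hA]
    simp only [transpose_add, transpose_transpose, hD, diagonal_transpose]
    abel
  set d := x' - x with hd
  set r := A *ᵥ x - b with hr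
  -- key equation: M d = -(ω • r)
  have hMx' : M *ᵥ x' = ((1 - ω) • D - ω • Lᵀ) *ᵥ x + ω • b := by
    rw [hx', mulVec_mulVec, Matrix.mul_nonsing_inv _ hdet, one_mulVec]
  have hMd : M *ᵥ d = -(ω • r) := by
    have hmat : ((1 - ω) • D - ω • Lᵀ) - M = -(ω • A) := by
      rw [hA, hMdef]; module
    rw [hd, mulVec_sub, hMx', hr]
    rw [add_sub_right_comm, ← sub_mulVec, hmat, neg_mulVec,
      smul_mulVec, smul_sub]
    abel
  -- symmetric inner product identities
  have hdot_symm : ∀ v w : Fin n → ℝ, v ⬝ᵥ A *ᵥ w = w ⬝ᵥ A *ᵥ v := by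
    intro v w
    rw [dotProduct_mulVec, dotProduct_comm]
    conv_lhs => rw [← hAsymm, vecMul_transpose]
  have hLsymm : d ⬝ᵥ Lᵀ *ᵥ d = d ⬝ᵥ L *ᵥ d := by
    rw [dotProduct_mulVec, vecMul_transpose, dotProduct_comm]
  set q : ℝ := d ⬝ᵥ D *ᵥ d with hq
  set p : ℝ := d ⬝ᵥ L *ᵥ d with hp
  have hdAd : d ⬝ᵥ A *ᵥ d = q + 2 * p := by
    rw [hA]
    simp only [add_mulVec, dotProduct_add, hLsymm, ← hq, ← hp]
    ring
  have hdMd : d ⬝ᵥ M *ᵥ d = q + ω * p := by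
    rw [hMdef]
    simp only [add_mulVec, dotProduct_add, smul_mulVec, dotProduct_smul,
      smul_eq_mul, ← hq, ← hp]
  have hdr : d ⬝ᵥ r = -(1/ω) * (q + ω * p) := by
    have h1 : d ⬝ᵥ (M *ᵥ d) = d ⬝ᵥ (-(ω • r)) := by rw [hMd]
    rw [hdMd] at h1
    have h2 : d ⬝ᵥ (-(ω • r)) = -(ω * (d ⬝ᵥ r)) := by
      simp [dotProduct_neg, dotProduct_smul]
    rw [h2] at h1
    field_simp
    linarith
  -- the main energy identity
  have hkey : f x' - f x = (1/2 - 1/ω) * q := by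
    have hx'd : x' = x + d := by rw [hd]; abel
    rw [hfdef, hx'd]
    simp only
    have hexp : (x + d) ⬝ᵥ A *ᵥ (x + d) =
        x ⬝ᵥ A *ᵥ x + 2 * (d ⬝ᵥ A *ᵥ x) + d ⬝ᵥ A *ᵥ d := by
      simp only [mulVec_add, dotProduct_add, add_dotProduct]
      rw [hdot_symm x d]
      ring
    have hdb : (x + d) ⬝ᵥ b = x ⬝ᵥ b + d ⬝ᵥ b := by
      simp [add_dotProduct]
    rw [hexp, hdb, hdAd]
    have hdrb : d ⬝ᵥ A *ᵥ x - d ⬝ᵥ b = d ⬝ᵥ r := by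
      rw [hr, dotProduct_sub]
    have : d ⬝ᵥ A *ᵥ x = d ⬝ᵥ r + d ⬝ᵥ b := by rw [← hdrb]; ring
    rw [this, hdr]
    field_simp
    ring
  -- positivity of q
  have hqval : q = ∑ i, A i i * (d i)^2 := by
    rw [hq, hD, dotProduct]
    refine Finset.sum_congr rfl fun i _ => ?_
    rw [mulVec_diagonal]
    ring
  have hq0 : 0 ≤ q := by
    rw [hqval]
    exact Finset.sum_nonneg fun i _ => mul_nonneg (hdiag i).le (sq_nonneg _)
  have hcoef : (1/2 - 1/ω : ℝ) < 0 := by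
    have : (1:ℝ)/2 < 1/ω := by
      apply one_div_lt_one_div_of_lt hω0 hω2
    linarith
  constructor
  · nlinarith [hkey]
  · constructor
    · intro hfe
      have hq0' : q = 0 := by
        have : (1/2 - 1/ω) * q = 0 := by rw [← hkey]; linarith
        rcases mul_eq_zero.mp this with h | h
        · linarith
        · exact h
      have hd0 : d = 0 := by
        funext i
        have hterm : ∀ j ∈ Finset.univ, 0 ≤ A j j * (d j)^2 :=
          fun j _ => mul_nonneg (hdiag j).le (sq_nonneg _)
        have := (Finset.sum_eq_zero_iff_of_nonneg hterm).mp (hqval ▸ hq0') i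
          (Finset.mem_univ i)
        have hd2 : (d i)^2 = 0 := by
          rcases mul_eq_zero.mp this with h | h
          · exact absurd h (hdiag i).ne'
          · exact h
        simpa using pow_eq_zero_iff (n := 2) (by norm_num) |>.mp hd2
      have : M *ᵥ d = 0 := by rw [hd0, mulVec_zero]
      rw [hMd] at this
      have hr0 : r = 0 := by
        have := neg_eq_zero.mp this
        have := smul_eq_zero.mp this
        rcases this with h | h
        · exact absurd h hω0.ne'
        · exact h
      rw [hr] at hr0
      exact sub_eq_zero.mp hr0
    · intro hAxb
      have hr0 : r = 0 := by rw [hr, hAxb, sub_self]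
      have hMd0 : M *ᵥ d = 0 := by rw [hMd, hr0]; simp
      have hd0 : d = 0 := by
        have : M⁻¹ *ᵥ (M *ᵥ d) = d := by
          rw [mulVec_mulVec, Matrix.nonsing_inv_mul _ hdet, one_mulVec]
        rw [hMd0, mulVec_zero] at this
        exact this.symm
      have hq0' : q = 0 := by rw [hq, hd0]; simp
      have h0 : f x' - f x = 0 := by rw [hkey, hq0', mul_zero]
      linarith
end

section
/- For A symmetric positive definite and f(x) = ½ xᵀAx - xᵀb, every iterate x' = x - h D⁻¹ ∇_d f(x', x) of the discrete gradient scheme with fixed h > 0 and D = diag(A) is uniquely defined: the implicit equation has a unique solution x' for each x, given explicitly by the SOR update with ω = 2h/(2+h). -/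
open Matrix Finset

-- split sum: terms vanish above i
lemma dg_sum_split_lt {n : ℕ} (i : Fin n) (g : Fin n → ℝ) (hg : ∀ j, i < j → g j = 0) :
    ∑ j, g j = (∑ j ∈ Finset.univ.filter (fun j => j < i), g j) + g i := by
  rw [← Finset.sum_filter_add_sum_filter_not Finset.univ (fun j => j < i) g]
  congr 1
  rw [Finset.sum_eq_single_of_mem i (by simp)]
  intro j hj hji
  exact hg j (lt_of_le_of_ne (not_lt.mp (by simpa using hj)) (Ne.symm hji))

lemma dg_sum_split_gt {n : ℕ} (i : Fin n) (g : Fin n → ℝ) (hg : ∀ j, j < i → g j = 0) :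
    ∑ j, g j = g i + (∑ j ∈ Finset.univ.filter (fun j => i < j), g j) := by
  rw [← Finset.sum_filter_add_sum_filter_not Finset.univ (fun j => i < j) g, add_comm]
  congr 1
  rw [Finset.sum_eq_single_of_mem i (by simp)]
  intro j hj hji
  exact hg j (lt_of_le_of_ne (not_lt.mp (by simpa using hj)) hji)


/-- The implicit discrete gradient equation `x' = x - h D⁻¹ ∇_d f(x', x)` for the
quadratic `f x = ½ xᵀAx - xᵀb` has a unique solution `x'` for each `x`, given
explicitly by the SOR update with `ω = 2h/(2+h)`. -/
theorem discrete_gradient_step_unique {n : ℕ}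
    (A D L : Matrix (Fin n) (Fin n) ℝ)
    (hApd : A.PosDef)
    (hD : D = Matrix.diagonal (fun i => A i i))
    (hL : ∀ i j : Fin n, i ≤ j → L i j = 0)
    (hA : A = D + L + Lᵀ)
    (b : Fin n → ℝ) (h : ℝ) (hh : 0 < h) (ω : ℝ) (hω : ω = 2 * h / (2 + h))
    (x : Fin n → ℝ) :
    (∃! x' : Fin n → ℝ,
       ∀ i : Fin n,
         x' i = x i - h * (A i i)⁻¹ *
           ((∑ j ∈ Finset.univ.filter (fun j => j < i), A i j * x' j) +
             A i i * (x' i + x i) / 2 +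
             (∑ j ∈ Finset.univ.filter (fun j => i < j), A i j * x j) - b i)) ∧
    (∀ i : Fin n,
       ((D + ω • L)⁻¹.mulVec ((((1 - ω) • D - ω • Lᵀ).mulVec x) + ω • b)) i =
         x i - h * (A i i)⁻¹ *
           ((∑ j ∈ Finset.univ.filter (fun j => j < i),
               A i j * ((D + ω • L)⁻¹.mulVec
                 ((((1 - ω) • D - ω • Lᵀ).mulVec x) + ω • b)) j) +
             A i i * (((D + ω • L)⁻¹.mulVec
                 ((((1 - ω) • D - ω • Lᵀ).mulVec x) + ω • b)) i + x i) / 2 +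
             (∑ j ∈ Finset.univ.filter (fun j => i < j), A i j * x j) - b i)) := by
  -- basic facts
  have hdiag : ∀ i, 0 < A i i := by
    intro i
    have := hApd.dotProduct_mulVec_pos (x := Pi.single i 1) (by simp [Function.ne_iff])
    simpa [Matrix.mulVec_single, dotProduct, Pi.single_apply] using this
  have h2h : (2 : ℝ) + h ≠ 0 := by positivity
  -- entries of A off the diagonal in terms of L
  have hAlt : ∀ i j : Fin n, j < i → A i j = L i j := by
    intro i j hji
    have := congrFun (congrFun hA i) j
    simpa [hD, Matrix.diagonal_apply_ne _ hji.ne', Matrix.transpose_apply,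
      hL j i hji.le] using this
  have hAgt : ∀ i j : Fin n, i < j → A i j = L j i := by
    intro i j hij
    have := congrFun (congrFun hA i) j
    simp [hD, Matrix.diagonal_apply_ne _ (ne_of_lt hij),
      Matrix.transpose_apply, hL i j hij.le] at this
    exact this
  set M : Matrix (Fin n) (Fin n) ℝ := D + ω • L with hM
  have hMentry : ∀ i j : Fin n, M i j = D i j + ω * L i j := by
    intro i j; simp [hM]
  have hMut : ∀ i j : Fin n, i < j → M i j = 0 := by
    intro i j hij
    rw [hMentry, hD, Matrix.diagonal_apply_ne _ (ne_of_lt hij), hL i j hij.le]; ring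
  have hMdiag : ∀ i, M i i = A i i := by
    intro i; rw [hMentry, hD, Matrix.diagonal_apply_eq, hL i i le_rfl]; ring
  -- invertibility of M
  have hdet : IsUnit M.det := by
    have : M.BlockTriangular OrderDual.toDual := by
      intro i j hij
      exact hMut i j hij
    rw [Matrix.det_of_lowerTriangular M this]
    exact IsUnit.mk0 _ (Finset.prod_ne_zero_iff.mpr fun i _ => by
      rw [hMdiag]; exact ne_of_gt (hdiag i))
  set v : Fin n → ℝ := (((1 - ω) • D - ω • Lᵀ).mulVec x) + ω • b with hv
  set y : Fin n → ℝ := M⁻¹.mulVec v with hy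
  have hMy : M.mulVec y = v := by
    rw [hy, Matrix.mulVec_mulVec, Matrix.mul_nonsing_inv M hdet, Matrix.one_mulVec]
  -- key componentwise identity
  have key : ∀ i : Fin n,
      A i i * y i + ω * ∑ j ∈ Finset.univ.filter (fun j => j < i), A i j * y j
        = (1 - ω) * A i i * x i - ω * (∑ j ∈ Finset.univ.filter (fun j => i < j), A i j * x j)
          + ω * b i := by
    intro i
    have hlhs := congrFun hMy i
    rw [Matrix.mulVec, dotProduct] at hlhs
    rw [dg_sum_split_lt i _ (fun j hj => by rw [hMut i j hj]; ring)] at hlhs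
    have hvi : v i = (1 - ω) * A i i * x i
        - ω * (∑ j ∈ Finset.univ.filter (fun j => i < j), A i j * x j) + ω * b i := by
      rw [hv]
      simp only [Pi.add_apply, Pi.smul_apply, smul_eq_mul, Matrix.mulVec, dotProduct]
      rw [dg_sum_split_gt i (fun j => ((1 - ω) • D - ω • Lᵀ) i j * x j)
        (fun j hj => by
          simp [hD, Matrix.diagonal_apply_ne _ (ne_of_gt hj), Matrix.transpose_apply,
            hL j i hj.le])]
      rw [Finset.mul_sum]
      congr 1
      · congr 1
        · simp [hD, Matrix.transpose_apply, hL i i le_rfl]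
        · rw [← Finset.sum_neg_distrib]
          apply Finset.sum_congr rfl
          intro j hj
          simp only [Finset.mem_filter] at hj
          simp [hD, Matrix.diagonal_apply_ne _ (ne_of_lt hj.2), Matrix.transpose_apply,
            hAgt i j hj.2]
          ring
    rw [hvi] at hlhs
    rw [← hlhs]
    rw [hMdiag, Finset.mul_sum]
    have : ∀ j ∈ Finset.univ.filter (fun j => j < i), M i j * y j = ω * (A i j * y j) := by
      intro j hj
      simp only [Finset.mem_filter] at hj
      rw [hMentry, hD, Matrix.diagonal_apply_ne _ (ne_of_gt hj.2), hAlt i j hj.2]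
      ring
    rw [Finset.sum_congr rfl this]
    ring
  -- y satisfies the implicit equation
  have hsat : ∀ i : Fin n,
      y i = x i - h * (A i i)⁻¹ *
        ((∑ j ∈ Finset.univ.filter (fun j => j < i), A i j * y j) +
          A i i * (y i + x i) / 2 +
          (∑ j ∈ Finset.univ.filter (fun j => i < j), A i j * x j) - b i) := by
    intro i
    have hk := key i
    have ha := (hdiag i).ne'
    rw [hω] at hk
    field_simp at hk ⊢
    nlinarith [hk, sq_nonneg h]
  refine ⟨⟨y, hsat, ?_⟩, hsat⟩
  -- uniqueness
  intro z hz
  have step : ∀ i : Fin n, (∀ j, j < i → z j = y j) → z i = y i := by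
    intro i ih
    have e1 := hz i
    have e2 := hsat i
    have hsum : (∑ j ∈ Finset.univ.filter (fun j => j < i), A i j * z j)
        = ∑ j ∈ Finset.univ.filter (fun j => j < i), A i j * y j := by
      apply Finset.sum_congr rfl
      intro j hj
      simp only [Finset.mem_filter] at hj
      rw [ih j hj.2]
    rw [hsum] at e1
    have ha := (hdiag i).ne'
    have e3 : z i - y i = -(h / 2 * ((A i i)⁻¹ * A i i * (z i - y i))) := by
      linear_combination e1 - e2
    rw [inv_mul_cancel₀ ha, one_mul] at e3
    have e4 : (2 + h) * (z i - y i) = 0 := by linarith [e3]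
    rcases mul_eq_zero.mp e4 with hc | hc
    · exact absurd hc h2h
    · linarith [hc]
  have H : ∀ m : ℕ, ∀ i : Fin n, (i : ℕ) < m → z i = y i := by
    intro m
    induction m with
    | zero => intro i hi; omega
    | succ m ih =>
      intro i hi
      exact step i fun j hj => ih j (by omega)
  funext i
  exact H (i + 1) i (Nat.lt_succ_self _)
end

section
/- For A symmetric positive definite with A = D + L + Lᵀ, the decrease in f(x) = ½ xᵀAx - xᵀb over one SOR step with parameter ω ∈ (0,2) equals f(x) - f(x') = ((2-ω)/(2ω)) (x' - x)ᵀ D (x' - x), where x' = G_ω x + c_ω. In particular f(x') < f(x) whenever x' ≠ x. -/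
open Matrix

/-- Exact decrease of `f` over one SOR step:
`f(x) - f(x') = ((2-ω)/(2ω)) (x'-x)ᵀ D (x'-x)`; in particular `f(x') < f(x)` when `x' ≠ x`. -/
theorem sor_step_exact_decrease {n : ℕ}
    (A D L : Matrix (Fin n) (Fin n) ℝ)
    (hApd : A.PosDef)
    (hD : D = Matrix.diagonal (fun i => A i i))
    (hdiag : ∀ i, 0 < A i i)
    (hL : ∀ i j : Fin n, i ≤ j → L i j = 0)
    (hA : A = D + L + Lᵀ)
    (b : Fin n → ℝ) (ω : ℝ) (hω : ω ∈ Set.Ioo (0 : ℝ) 2)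
    (f : (Fin n → ℝ) → ℝ)
    (hfdef : f = fun x => (1 / 2) * (x ⬝ᵥ A.mulVec x) - x ⬝ᵥ b)
    (x x' : Fin n → ℝ)
    (hx' : x' = (D + ω • L)⁻¹.mulVec ((((1 - ω) • D - ω • Lᵀ).mulVec x) + ω • b)) :
    f x - f x' = ((2 - ω) / (2 * ω)) * ((x' - x) ⬝ᵥ D.mulVec (x' - x)) ∧
      (x' ≠ x → f x' < f x) := by
  obtain ⟨hω0, hω2⟩ := hω
  have hωne : ω ≠ 0 := ne_of_gt hω0
  set M : Matrix (Fin n) (Fin n) ℝ := D + ω • L with hM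
  -- M is lower triangular with diagonal equal to that of A
  have htri : M.BlockTriangular OrderDual.toDual := by
    intro i j hij
    have hij' : (i : Fin n) < j := hij
    simp [hM, hD, Matrix.diagonal_apply_ne _ (ne_of_lt hij'), hL i j hij'.le]
  have hMdiag : ∀ i, M i i = A i i := by
    intro i; simp [hM, hD, hL i i le_rfl]
  have hdet : M.det = ∏ i, A i i := by
    rw [Matrix.det_of_lowerTriangular M htri]
    exact Finset.prod_congr rfl fun i _ => hMdiag i
  have hunit : IsUnit M.det := by
    rw [hdet, isUnit_iff_ne_zero]
    exact (Finset.prod_pos fun i _ => hdiag i).ne'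
  have hMx' : M *ᵥ x' = ((1 - ω) • D - ω • Lᵀ) *ᵥ x + ω • b := by
    rw [hx', Matrix.mulVec_mulVec, Matrix.mul_nonsing_inv _ hunit, Matrix.one_mulVec]
  set d : Fin n → ℝ := x' - x with hd
  have hxd : x' = x + d := by rw [hd]; abel
  -- key equation: (D + ωL) d = ω (b - A x)
  have hkey : D *ᵥ d + ω • (L *ᵥ d) = ω • (b - A *ᵥ x) := by
    funext i
    have h1 := congrFun hMx' i
    simp only [hM, hd, hA, Matrix.add_mulVec, Matrix.sub_mulVec, Matrix.smul_mulVec,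
      Matrix.mulVec_sub, Pi.add_apply, Pi.sub_apply, Pi.smul_apply, smul_eq_mul] at h1 ⊢
    linear_combination h1
  -- transpose facts
  have hAs : Aᵀ = A := by
    rw [hA]
    simp only [Matrix.transpose_add, Matrix.transpose_transpose, hD,
      Matrix.diagonal_transpose]
    abel
  have hsym : ∀ v w : Fin n → ℝ, v ⬝ᵥ A *ᵥ w = w ⬝ᵥ A *ᵥ v := by
    intro v w
    rw [Matrix.dotProduct_mulVec, ← Matrix.mulVec_transpose, hAs, dotProduct_comm]
  have hLsym : d ⬝ᵥ Lᵀ *ᵥ d = d ⬝ᵥ L *ᵥ d := by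
    rw [Matrix.dotProduct_mulVec, ← Matrix.mulVec_transpose, Matrix.transpose_transpose,
      dotProduct_comm]
  set p : ℝ := d ⬝ᵥ D *ᵥ d with hp
  set q : ℝ := d ⬝ᵥ L *ᵥ d with hq
  set r : ℝ := d ⬝ᵥ b - d ⬝ᵥ A *ᵥ x with hr
  have heq1 : p + ω * q = ω * r := by
    have := congrArg (fun v => d ⬝ᵥ v) hkey
    simpa [hp, hq, hr, dotProduct_add, dotProduct_sub, dotProduct_smul,
      smul_eq_mul, mul_sub] using this
  have hdAd : d ⬝ᵥ A *ᵥ d = p + 2 * q := by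
    rw [hA, Matrix.add_mulVec, Matrix.add_mulVec, dotProduct_add,
      dotProduct_add, hLsym]
    ring
  have hfd : f x - f x' = r - (1 / 2) * (p + 2 * q) := by
    rw [hfdef, hxd]
    simp only [Matrix.mulVec_add, dotProduct_add, add_dotProduct]
    rw [hsym x d, hdAd, hr]
    ring
  have hrval : r = (p + ω * q) / ω := by
    field_simp [heq1]
    linarith
  have hmain : f x - f x' = ((2 - ω) / (2 * ω)) * p := by
    rw [hfd, hrval]
    field_simp
    ring
  refine ⟨hmain, fun hne => ?_⟩
  have hdne : d ≠ 0 := fun h => hne (by rw [hxd, h, add_zero])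
  have hppos : 0 < p := by
    have hpsum : p = ∑ i, A i i * d i ^ 2 := by
      rw [hp, hD]
      simp only [dotProduct, Matrix.mulVec_diagonal]
      exact Finset.sum_congr rfl fun i _ => by ring
    rw [hpsum]
    obtain ⟨i, hi⟩ := Function.ne_iff.mp hdne
    refine Finset.sum_pos' (fun j _ => ?_) ⟨i, Finset.mem_univ i, ?_⟩
    · exact mul_nonneg (hdiag j).le (sq_nonneg _)
    · have : 0 < d i ^ 2 := by
        have hi' : d i ≠ 0 := by simpa using hi
        positivity
      exact mul_pos (hdiag i) this
  have : 0 < f x - f x' := by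
    rw [hmain]
    apply mul_pos _ hppos
    apply div_pos (by linarith) (by linarith)
  linarith
end

section
/- If A is symmetric positive definite and x^{(k+1)} = G_ω x^{(k)} + c_ω is the SOR iteration with fixed ω ∈ (0,2), then the sequence f(x^{(k)}) with f(x) = ½ xᵀAx - xᵀb is non-increasing and converges, and x^{(k)} → A⁻¹b as k → ∞. -/
open Matrix

/-- For `A` symmetric positive definite and fixed `ω ∈ (0,2)`, the SOR iteration
produces non-increasing, convergent energies `f(x^{(k)})`, and `x^{(k)} → A⁻¹ b`. -/
theorem sor_converges {n : ℕ}
    (A D L : Matrix (Fin n) (Fin n) ℝ)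
    (hApd : A.PosDef)
    (hD : D = Matrix.diagonal (fun i => A i i))
    (hL : ∀ i j : Fin n, i ≤ j → L i j = 0)
    (hA : A = D + L + Lᵀ)
    (b : Fin n → ℝ) (ω : ℝ) (hω : ω ∈ Set.Ioo (0 : ℝ) 2)
    (f : (Fin n → ℝ) → ℝ)
    (hfdef : f = fun x => (1 / 2) * (x ⬝ᵥ A.mulVec x) - x ⬝ᵥ b)
    (x : ℕ → Fin n → ℝ)
    (hx : ∀ k : ℕ,
      x (k + 1) = (D + ω • L)⁻¹.mulVec ((((1 - ω) • D - ω • Lᵀ).mulVec (x k)) + ω • b)) :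
    (∀ k : ℕ, f (x (k + 1)) ≤ f (x k)) ∧
      (∃ l : ℝ, Filter.Tendsto (fun k => f (x k)) Filter.atTop (nhds l)) ∧
      Filter.Tendsto x Filter.atTop (nhds (A⁻¹.mulVec b)) := by
  obtain ⟨hω0, hω2⟩ := hω
  have hωne : ω ≠ 0 := ne_of_gt hω0
  -- symmetry of A
  have hAsymm : Aᵀ = A := by
    have h := hApd.1
    rwa [Matrix.IsHermitian, Matrix.conjTranspose_eq_transpose_of_trivial] at h
  have hsymA : ∀ v w : Fin n → ℝ, v ⬝ᵥ A *ᵥ w = w ⬝ᵥ A *ᵥ v := by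
    intro v w
    rw [Matrix.dotProduct_mulVec, ← Matrix.mulVec_transpose, hAsymm, dotProduct_comm]
  -- positive diagonal
  have hdiag : ∀ i, 0 < A i i := by
    intro i
    have h := hApd.dotProduct_mulVec_pos (x := Pi.single i 1) (by
      intro hcon
      have := congrFun hcon i
      simp at this)
    simpa [dotProduct, Matrix.mulVec, Pi.single_apply, Finset.sum_ite_eq,
      Finset.sum_ite_eq'] using h
  have hAnn : ∀ v : Fin n → ℝ, 0 ≤ v ⬝ᵥ A *ᵥ v := by
    intro v
    have h := hApd.posSemidef.dotProduct_mulVec_nonneg v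
    simpa using h
  -- the quadratic form of D
  have hDq : ∀ v : Fin n → ℝ, v ⬝ᵥ D *ᵥ v = ∑ i, A i i * v i ^ 2 := by
    intro v
    rw [hD]
    simp only [dotProduct, Matrix.mulVec_diagonal]
    refine Finset.sum_congr rfl fun i _ => by ring
  have hDnn : ∀ v : Fin n → ℝ, 0 ≤ v ⬝ᵥ D *ᵥ v := by
    intro v
    rw [hDq]
    exact Finset.sum_nonneg fun i _ => mul_nonneg (le_of_lt (hdiag i)) (sq_nonneg _)
  set M := D + ω • L with hMdef
  set N := (1 - ω) • D - ω • Lᵀ with hNdef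
  -- M is lower triangular with unit determinant
  have hMlow : M.BlockTriangular OrderDual.toDual := by
    intro i j hij
    have hij' : (i : Fin n) < j := hij
    have hDij : D i j = 0 := by
      rw [hD]; exact Matrix.diagonal_apply_ne _ (ne_of_lt hij')
    have hLij : L i j = 0 := hL i j (le_of_lt hij')
    simp [hMdef, hDij, hLij]
  have hMdiag : ∀ i, M i i = A i i := by
    intro i
    have hLii : L i i = 0 := hL i i le_rfl
    simp [hMdef, hD, hLii]
  have hMunit : IsUnit M.det := by
    rw [Matrix.det_of_lowerTriangular M hMlow]
    refine isUnit_iff_ne_zero.2 (ne_of_gt ?_)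
    exact Finset.prod_pos fun i _ => by rw [hMdiag]; exact hdiag i
  have hAunit : IsUnit A.det := isUnit_iff_ne_zero.2 (ne_of_gt hApd.det_pos)
  -- the recurrence
  have hrec : ∀ k, M *ᵥ x (k + 1) = N *ᵥ x k + ω • b := by
    intro k
    rw [hx k, Matrix.mulVec_mulVec, Matrix.mul_nonsing_inv _ hMunit, Matrix.one_mulVec]
  have hMN : M - N = ω • A := by
    rw [hA, hMdef, hNdef]
    module
  obtain ⟨δ, hδdef⟩ : ∃ δ : ℕ → Fin n → ℝ, δ = fun k => x (k + 1) - x k := ⟨_, rfl⟩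
  have hxsucc : ∀ k, x (k + 1) = x k + δ k := by
    intro k; rw [hδdef]; simp
  have hMδ : ∀ k, M *ᵥ δ k = ω • (b - A *ᵥ x k) := by
    intro k
    have : M *ᵥ δ k = M *ᵥ x (k + 1) - M *ᵥ x k := by
      rw [hδdef]; exact Matrix.mulVec_sub M _ _
    rw [this, hrec k]
    have h2 : (M - N) *ᵥ x k = ω • (A *ᵥ x k) := by
      rw [hMN, Matrix.smul_mulVec]
    rw [Matrix.sub_mulVec] at h2
    have h3 : M *ᵥ x k = N *ᵥ x k + ω • (A *ᵥ x k) := by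
      rw [← h2]; abel
    rw [h3, smul_sub]
    abel
  -- energy expansion
  have expand : ∀ y d : Fin n → ℝ,
      f (y + d) - f y = d ⬝ᵥ A *ᵥ y + (1 / 2) * (d ⬝ᵥ A *ᵥ d) - d ⬝ᵥ b := by
    intro y d
    have hsym : y ⬝ᵥ A *ᵥ d = d ⬝ᵥ A *ᵥ y := hsymA y d
    simp only [hfdef, Matrix.mulVec_add, dotProduct_add, add_dotProduct]
    rw [hsym]
    ring
  -- the splitting of quadratic forms
  have hAsplit : ∀ d : Fin n → ℝ,
      d ⬝ᵥ A *ᵥ d = d ⬝ᵥ D *ᵥ d + 2 * (d ⬝ᵥ L *ᵥ d) := by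
    intro d
    have hLt : d ⬝ᵥ Lᵀ *ᵥ d = d ⬝ᵥ L *ᵥ d := by
      rw [Matrix.dotProduct_mulVec, Matrix.vecMul_transpose, dotProduct_comm,
        Matrix.dotProduct_mulVec]
    rw [hA]
    simp only [Matrix.add_mulVec, dotProduct_add]
    rw [hLt]; ring
  have hMsplit : ∀ d : Fin n → ℝ,
      d ⬝ᵥ M *ᵥ d = d ⬝ᵥ D *ᵥ d + ω * (d ⬝ᵥ L *ᵥ d) := by
    intro d
    rw [hMdef]
    simp only [Matrix.add_mulVec, dotProduct_add, Matrix.smul_mulVec,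
      dotProduct_smul, smul_eq_mul]
  -- key energy identity
  have key : ∀ k, f (x (k + 1)) - f (x k) =
      (1 / 2 - 1 / ω) * (δ k ⬝ᵥ D *ᵥ δ k) := by
    intro k
    have e1 : f (x (k + 1)) - f (x k) =
        δ k ⬝ᵥ A *ᵥ x k + (1 / 2) * (δ k ⬝ᵥ A *ᵥ δ k) - δ k ⬝ᵥ b := by
      rw [← expand (x k) (δ k), ← hxsucc k]
    have e2 : δ k ⬝ᵥ M *ᵥ δ k = ω * (δ k ⬝ᵥ b - δ k ⬝ᵥ A *ᵥ x k) := by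
      rw [hMδ k, dotProduct_smul, smul_eq_mul, dotProduct_sub]
    rw [hMsplit] at e2
    have e2' : ω * (δ k ⬝ᵥ A *ᵥ x k - δ k ⬝ᵥ b)
        = -((δ k ⬝ᵥ D *ᵥ δ k) + ω * (δ k ⬝ᵥ L *ᵥ δ k)) := by
      linear_combination e2
    rw [e1, hAsplit]
    field_simp
    linarith [e2']
  -- coefficient is negative
  have hc : (1 / 2 - 1 / ω : ℝ) < 0 := by
    have : (1 : ℝ) / 2 < 1 / ω := by
      apply one_div_lt_one_div_of_lt hω0 hω2
    linarith
  -- monotone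
  have hmono : ∀ k, f (x (k + 1)) ≤ f (x k) := by
    intro k
    have := key k
    nlinarith [hDnn (δ k), this]
  -- lower bound
  set xs : Fin n → ℝ := A⁻¹ *ᵥ b with hxs
  have hAxs : A *ᵥ xs = b := by
    rw [hxs, Matrix.mulVec_mulVec, Matrix.mul_nonsing_inv _ hAunit, Matrix.one_mulVec]
  have hlb : ∀ v : Fin n → ℝ, f xs ≤ f v := by
    intro v
    have h := expand xs (v - xs)
    rw [add_sub_cancel, hAxs] at h
    nlinarith [hAnn (v - xs), h]
  -- convergence of energies
  have hanti : Antitone fun k => f (x k) := antitone_nat_of_succ_le hmono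
  have hbdd : BddBelow (Set.range fun k => f (x k)) := by
    refine ⟨f xs, ?_⟩
    rintro r ⟨k, rfl⟩
    exact hlb (x k)
  have hconv : Filter.Tendsto (fun k => f (x k)) Filter.atTop
      (nhds (⨅ k, f (x k))) := tendsto_atTop_ciInf hanti hbdd
  set l : ℝ := ⨅ k, f (x k) with hldef
  -- δᵀ D δ → 0
  have hshift : Filter.Tendsto (fun k => f (x (k + 1))) Filter.atTop (nhds l) := by
    exact hconv.comp (Filter.tendsto_add_atTop_nat 1)
  have hdiff : Filter.Tendsto (fun k => f (x (k + 1)) - f (x k)) Filter.atTop (nhds 0) := by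
    have := hshift.sub hconv
    simpa using this
  have hq0 : Filter.Tendsto (fun k => δ k ⬝ᵥ D *ᵥ δ k) Filter.atTop (nhds 0) := by
    have h1 : Filter.Tendsto (fun k => (1 / 2 - 1 / ω) * (δ k ⬝ᵥ D *ᵥ δ k))
        Filter.atTop (nhds 0) := by
      have : (fun k => (1 / 2 - 1 / ω) * (δ k ⬝ᵥ D *ᵥ δ k)) =
          fun k => f (x (k + 1)) - f (x k) := by
        funext k; rw [key k]
      rw [this]; exact hdiff
    have hne : (1 / 2 - 1 / ω : ℝ) ≠ 0 := ne_of_lt hc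
    have h2 := h1.const_mul (1 / 2 - 1 / ω)⁻¹
    simp only [mul_zero] at h2
    have heq : (fun k => (1 / 2 - 1 / ω)⁻¹ * ((1 / 2 - 1 / ω) * (δ k ⬝ᵥ D *ᵥ δ k)))
        = fun k => δ k ⬝ᵥ D *ᵥ δ k := by
      funext k; rw [← mul_assoc, inv_mul_cancel₀ hne, one_mul]
    rwa [heq] at h2
  -- δ → 0
  have hδ0 : Filter.Tendsto δ Filter.atTop (nhds 0) := by
    rw [tendsto_pi_nhds]
    intro i
    have hterm : Filter.Tendsto (fun k => A i i * δ k i ^ 2) Filter.atTop (nhds 0) := by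
      apply squeeze_zero (fun k => mul_nonneg (le_of_lt (hdiag i)) (sq_nonneg _))
        (fun k => ?_) hq0
      rw [hDq (δ k)]
      exact Finset.single_le_sum
        (fun j _ => mul_nonneg (le_of_lt (hdiag j)) (sq_nonneg _)) (Finset.mem_univ i)
    have hsq : Filter.Tendsto (fun k => δ k i ^ 2) Filter.atTop (nhds 0) := by
      have h2 := hterm.const_mul (A i i)⁻¹
      simp only [mul_zero] at h2
      have heq : (fun k => (A i i)⁻¹ * (A i i * δ k i ^ 2)) = fun k => δ k i ^ 2 := by
        funext k; rw [← mul_assoc, inv_mul_cancel₀ (ne_of_gt (hdiag i)), one_mul]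
      rwa [heq] at h2
    have habs : Filter.Tendsto (fun k => |δ k i|) Filter.atTop (nhds 0) := by
      have h3 := (Real.continuous_sqrt.tendsto 0).comp hsq
      rw [Real.sqrt_zero] at h3
      exact h3.congr fun k => Real.sqrt_sq_eq_abs _
    have h4 : Filter.Tendsto (fun k => δ k i) Filter.atTop (nhds 0) := by
      rw [tendsto_zero_iff_abs_tendsto_zero]
      exact habs
    simpa using h4
  -- A x k → b
  have hcontM : Continuous fun v : Fin n → ℝ => M *ᵥ v :=
    continuous_const.matrix_mulVec continuous_id
  have hMδ0 : Filter.Tendsto (fun k => M *ᵥ δ k) Filter.atTop (nhds 0) := by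
    have := (hcontM.tendsto 0).comp hδ0
    simpa [Function.comp_def, Matrix.mulVec_zero] using this
  have hres : Filter.Tendsto (fun k => b - A *ᵥ x k) Filter.atTop (nhds 0) := by
    have h1 : Filter.Tendsto (fun k => ω • (b - A *ᵥ x k)) Filter.atTop (nhds 0) := by
      have : (fun k => ω • (b - A *ᵥ x k)) = fun k => M *ᵥ δ k := by
        funext k; rw [hMδ k]
      rw [this]; exact hMδ0
    have h2 := h1.const_smul ω⁻¹
    simpa [smul_smul, inv_mul_cancel₀ hωne] using h2
  have hAx : Filter.Tendsto (fun k => A *ᵥ x k) Filter.atTop (nhds b) := by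
    have h2 := (tendsto_const_nhds (x := b) (f := (Filter.atTop : Filter ℕ))).sub hres
    simpa [sub_sub_cancel] using h2
  -- x k → A⁻¹ b
  have hcontAinv : Continuous fun v : Fin n → ℝ => A⁻¹ *ᵥ v :=
    continuous_const.matrix_mulVec continuous_id
  have hxid : ∀ k, A⁻¹ *ᵥ (A *ᵥ x k) = x k := by
    intro k
    rw [Matrix.mulVec_mulVec, Matrix.nonsing_inv_mul _ hAunit, Matrix.one_mulVec]
  have hxlim : Filter.Tendsto x Filter.atTop (nhds (A⁻¹ *ᵥ b)) := by
    have := (hcontAinv.tendsto b).comp hAx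
    have heq : (fun k => A⁻¹ *ᵥ (A *ᵥ x k)) = x := funext hxid
    rw [Function.comp_def, heq] at this  -- may need adjusting
    exact this
  exact ⟨hmono, ⟨l, hconv⟩, hxlim⟩
end
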